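/- Let k be a field of characteristic zero, A a commutative k-algebra, and D a locally nilpotent derivation with a slice x (D(x) = 1). Then the map π : A → A given by π(a) = Σ_{i≥0} ((−1)ⁱ/i!)·xⁱ·Dⁱ(a) (a finite sum by local nilpotence) is a ring homomorphism with image contained in ker(D) and π restricted to ker(D) is the identity. -/

import Mathlib

open Finset

section Aux

variable {k : Type*} [Field k] [CharZero k] {A : Type*} [CommRing A] [Algebra k A]

private lemma iterD_add (D : Derivation k A A) (n : ℕ) (a b : A) :
    (⇑D)^[n] (a + b) = (⇑D)^[n] a + (⇑D)^[n] b := by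
  induction n generalizing a b with
  | zero => simp
  | succ n ih => simp [Function.iterate_succ_apply, map_add, ih]

private lemma iterD_zero (D : Derivation k A A) (n : ℕ) : (⇑D)^[n] (0 : A) = 0 :=
  Function.iterate_fixed (map_zero D) n

private lemma iterD_stab (D : Derivation k A A) {a : A} {n m : ℕ} (h : n ≤ m)
    (hn : (⇑D)^[n] a = 0) : (⇑D)^[m] a = 0 := by
  have : m = (m - n) + n := by omega
  rw [this, Function.iterate_add_apply, hn, iterD_zero]

/-- Iterated Leibniz rule. -/
private lemma iterLeibniz (D : Derivation k A A) (a b : A) (n : ℕ) :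
    (⇑D)^[n] (a * b) = ∑ ij ∈ Finset.HasAntidiagonal.antidiagonal n,
      ((n.choose ij.1 : k)) • ((⇑D)^[ij.1] a * (⇑D)^[ij.2] b) := by
  induction n with
  | zero => simp
  | succ n ih =>
    rw [Function.iterate_succ_apply', ih, map_sum]
    have step : ∀ ij : ℕ × ℕ,
        D (((n.choose ij.1 : k)) • ((⇑D)^[ij.1] a * (⇑D)^[ij.2] b))
          = (n.choose ij.1 : k) • ((⇑D)^[ij.1 + 1] a * (⇑D)^[ij.2] b)
            + (n.choose ij.1 : k) • ((⇑D)^[ij.1] a * (⇑D)^[ij.2 + 1] b) := by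
      intro ij
      rw [Derivation.map_smul, Derivation.leibniz, smul_eq_mul, smul_eq_mul,
        Function.iterate_succ_apply', Function.iterate_succ_apply', smul_add]
      ring_nf
    calc
      ∑ ij ∈ Finset.HasAntidiagonal.antidiagonal n,
          D (((n.choose ij.1 : k)) • ((⇑D)^[ij.1] a * (⇑D)^[ij.2] b))
        = (∑ ij ∈ Finset.HasAntidiagonal.antidiagonal n,
            (n.choose ij.1 : k) • ((⇑D)^[ij.1 + 1] a * (⇑D)^[ij.2] b))
          + ∑ ij ∈ Finset.HasAntidiagonal.antidiagonal n,
            (n.choose ij.1 : k) • ((⇑D)^[ij.1] a * (⇑D)^[ij.2 + 1] b) := by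
          rw [← Finset.sum_add_distrib]; exact Finset.sum_congr rfl fun ij _ => step ij
      _ = ∑ ij ∈ Finset.HasAntidiagonal.antidiagonal (n + 1),
            (((n + 1).choose ij.1 : k)) • ((⇑D)^[ij.1] a * (⇑D)^[ij.2] b) := by
          rw [Finset.Nat.sum_antidiagonal_succ
            (f := fun ij : ℕ × ℕ =>
              (((n + 1).choose ij.1 : k)) • ((⇑D)^[ij.1] a * (⇑D)^[ij.2] b))]
          have h2 : ∑ ij ∈ Finset.HasAntidiagonal.antidiagonal n,
              (n.choose ij.1 : k) • ((⇑D)^[ij.1] a * (⇑D)^[ij.2 + 1] b)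
              = ∑ ij ∈ Finset.HasAntidiagonal.antidiagonal (n + 1),
                (n.choose ij.1 : k) • ((⇑D)^[ij.1] a * (⇑D)^[ij.2] b) := by
            rw [Finset.Nat.sum_antidiagonal_succ'
              (f := fun ij : ℕ × ℕ =>
                (n.choose ij.1 : k) • ((⇑D)^[ij.1] a * (⇑D)^[ij.2] b))]
            simp [Nat.choose_succ_self]
          rw [h2, Finset.Nat.sum_antidiagonal_succ
            (f := fun ij : ℕ × ℕ =>
              (n.choose ij.1 : k) • ((⇑D)^[ij.1] a * (⇑D)^[ij.2] b))]
          rw [← add_assoc, add_comm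
            (∑ ij ∈ Finset.HasAntidiagonal.antidiagonal n,
              (n.choose ij.1 : k) • ((⇑D)^[ij.1 + 1] a * (⇑D)^[ij.2] b)), add_assoc,
            ← Finset.sum_add_distrib]
          congr 1
          · simp
          · refine Finset.sum_congr rfl fun ij _ => ?_
            show (n.choose ij.1 : k) • ((⇑D)^[ij.1 + 1] a * (⇑D)^[ij.2] b)
                + (n.choose (ij.1 + 1) : k) • ((⇑D)^[ij.1 + 1] a * (⇑D)^[ij.2] b)
              = (((n + 1).choose (ij.1 + 1) : k)) • ((⇑D)^[ij.1 + 1] a * (⇑D)^[ij.2] b)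
            rw [← add_smul]
            congr 1
            rw [Nat.choose_succ_succ, Nat.cast_add]

end Aux

/-- Dixmier map: Let `k` be a field of characteristic zero, `A` a
commutative `k`-algebra, `D` a locally nilpotent derivation with a slice `x`
(`D x = 1`). The map `π(a) = Σ_{i} ((−1)ⁱ/i!)·xⁱ·Dⁱ(a)` (a finite sum by local
nilpotence) is a ring homomorphism with image in `ker D`, and `π` is the
identity on `ker D`. -/
theorem stmt13 (k : Type*) [Field k] [CharZero k]
    (A : Type*) [CommRing A] [Algebra k A]
    (D : Derivation k A A) (hLND : ∀ a : A, ∃ n : ℕ, (⇑D)^[n] a = 0)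
    (x : A) (hx : D x = 1)
    (π : A → A)
    (hπ : ∀ (a : A) (N : ℕ), (⇑D)^[N] a = 0 →
      π a = ∑ i ∈ Finset.range N,
        (((-1 : k) ^ i / (i.factorial : k)) • (x ^ i * (⇑D)^[i] a))) :
    (∀ a b : A, π (a * b) = π a * π b) ∧
    (∀ a b : A, π (a + b) = π a + π b) ∧
    π 1 = 1 ∧
    (∀ a : A, D (π a) = 0) ∧
    (∀ a : A, D a = 0 → π a = a) := by
  have factk : ∀ i : ℕ, (i.factorial : k) ≠ 0 := fun i =>
    Nat.cast_ne_zero.mpr i.factorial_ne_zero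
  refine ⟨?_, ?_, ?_, ?_, ?_⟩
  · -- multiplicativity
    intro a b
    obtain ⟨Na, hNa⟩ := hLND a
    obtain ⟨Nb, hNb⟩ := hLND b
    obtain ⟨M, hMa, hMb⟩ : ∃ M, Na ≤ M ∧ Nb ≤ M :=
      ⟨max Na Nb, le_max_left _ _, le_max_right _ _⟩
    have ha : ∀ i, M ≤ i → (⇑D)^[i] a = 0 := fun i hi =>
      iterD_stab D (le_trans hMa hi) hNa
    have hb : ∀ j, M ≤ j → (⇑D)^[j] b = 0 := fun j hj =>
      iterD_stab D (le_trans hMb hj) hNb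
    set F : ℕ × ℕ → A := fun p =>
      ((-1 : k) ^ p.1 / (p.1.factorial : k)) • ((-1 : k) ^ p.2 / (p.2.factorial : k)) •
        (x ^ (p.1 + p.2) * ((⇑D)^[p.1] a * (⇑D)^[p.2] b)) with hF
    have hF0 : ∀ p : ℕ × ℕ, M ≤ p.1 ∨ M ≤ p.2 → F p = 0 := by
      rintro ⟨i, j⟩ (h | h) <;> simp [hF, ha i, hb j, h]
    have hab : (⇑D)^[2 * M] (a * b) = 0 := by
      rw [iterLeibniz]
      refine Finset.sum_eq_zero fun ij hij => ?_
      have hsum := Finset.HasAntidiagonal.mem_antidiagonal.mp hij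
      rcases le_or_gt M ij.1 with h | h
      · rw [ha _ h, zero_mul, smul_zero]
      · rw [hb ij.2 (by omega), mul_zero, smul_zero]
    -- Step A : π a * π b as a sum over a product finset
    have stepA : π a * π b = ∑ p ∈ Finset.range M ×ˢ Finset.range M, F p := by
      rw [hπ a M (ha M le_rfl), hπ b M (hb M le_rfl), Finset.sum_mul_sum,
        Finset.sum_product]
      refine Finset.sum_congr rfl fun i _ => Finset.sum_congr rfl fun j _ => ?_
      rw [hF, smul_mul_assoc, mul_smul_comm]
      congr 1
      congr 1
      rw [pow_add]; ring
    -- Step B : π (a*b) as an iterated sum over antidiagonals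
    have stepB : π (a * b) = ∑ n ∈ Finset.range (2 * M),
        ∑ ij ∈ Finset.HasAntidiagonal.antidiagonal n, F ij := by
      rw [hπ (a * b) (2 * M) hab]
      refine Finset.sum_congr rfl fun n _ => ?_
      rw [iterLeibniz, Finset.mul_sum, Finset.smul_sum]
      refine Finset.sum_congr rfl fun ij hij => ?_
      have hsum := Finset.HasAntidiagonal.mem_antidiagonal.mp hij
      simp only [hF]
      rw [mul_smul_comm, smul_smul, smul_smul]
      congr 1
      · -- scalar identity
        have hle : ij.1 ≤ n := by omega
        have h2 : ij.2 = n - ij.1 := by omega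
        have key := Nat.choose_mul_factorial_mul_factorial hle
        have : ((n.choose ij.1 : k)) * (ij.1.factorial : k) * ((n - ij.1).factorial : k)
            = (n.factorial : k) := by exact_mod_cast congrArg (Nat.cast : ℕ → k) key
        have hsign : (-1 : k) ^ n = (-1 : k) ^ ij.1 * (-1 : k) ^ ij.2 := by
          rw [← pow_add, hsum]
        have hC : (n.choose ij.1 : k)
            = (n.factorial : k) / ((ij.1.factorial : k) * ((n - ij.1).factorial : k)) := by
          rw [eq_div_iff (mul_ne_zero (factk _) (factk _))]
          linear_combination this
        rw [hC, h2, hsign, h2]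
        field_simp
        rw [mul_assoc, div_mul_cancel_left₀ (factk n), one_div]
      · rw [← hsum]
    rw [stepA, stepB]
    -- Step C : reindex the iterated sum as a sum over the filtered product
    have stepC : ∑ n ∈ Finset.range (2 * M), ∑ ij ∈ Finset.HasAntidiagonal.antidiagonal n, F ij
        = ∑ p ∈ (Finset.range (2 * M) ×ˢ Finset.range (2 * M)).filter
            (fun p => p.1 + p.2 < 2 * M), F p := by
      rw [Finset.sum_sigma']
      refine Finset.sum_nbij' (fun σ => σ.2) (fun p => ⟨p.1 + p.2, p⟩) ?_ ?_ ?_ ?_ ?_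
      · rintro ⟨n, ij⟩ hσ
        simp only [Finset.mem_sigma, Finset.mem_range, Finset.HasAntidiagonal.mem_antidiagonal] at hσ
        simp only [Finset.mem_filter, Finset.mem_product, Finset.mem_range]
        omega
      · rintro p hp
        simp only [Finset.mem_filter, Finset.mem_product, Finset.mem_range] at hp
        simp only [Finset.mem_sigma, Finset.mem_range, Finset.HasAntidiagonal.mem_antidiagonal]
        exact ⟨hp.2, trivial⟩
      · rintro ⟨n, ij⟩ hσ
        simp only [Finset.mem_sigma, Finset.mem_range, Finset.HasAntidiagonal.mem_antidiagonal] at hσ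
        simp [hσ.2]
      · rintro p _; rfl
      · rintro ⟨n, ij⟩ _; rfl
    rw [stepC]
    -- Step D : drop the filter (terms outside vanish)
    rw [Finset.sum_filter_of_ne (by
      rintro ⟨i, j⟩ hp hne
      simp only [Finset.mem_product, Finset.mem_range] at hp
      by_contra hc
      exact hne (hF0 _ (by omega)))]
    -- Step E : shrink the product range (terms outside vanish)
    refine (Finset.sum_subset ?_ ?_).symm
    · exact Finset.product_subset_product
        (Finset.range_subset_range.mpr (by omega)) (Finset.range_subset_range.mpr (by omega))
    · rintro ⟨i, j⟩ hbig hsmall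
      simp only [Finset.mem_product, Finset.mem_range] at hbig hsmall
      exact hF0 _ (by omega)
  · -- additivity
    intro a b
    obtain ⟨Na, hNa⟩ := hLND a
    obtain ⟨Nb, hNb⟩ := hLND b
    set N := max Na Nb
    have ha : (⇑D)^[N] a = 0 := iterD_stab D (le_max_left _ _) hNa
    have hb : (⇑D)^[N] b = 0 := iterD_stab D (le_max_right _ _) hNb
    have hab : (⇑D)^[N] (a + b) = 0 := by rw [iterD_add, ha, hb, add_zero]
    rw [hπ a N ha, hπ b N hb, hπ (a + b) N hab, ← Finset.sum_add_distrib]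
    refine Finset.sum_congr rfl fun i _ => ?_
    rw [iterD_add, mul_add, smul_add]
  · -- π 1 = 1
    have h1 : (⇑D)^[1] (1 : A) = 0 := by
      simp [Derivation.map_one_eq_zero]
    rw [hπ 1 1 h1]
    simp
  · -- image in ker D
    intro a
    obtain ⟨N, hN⟩ := hLND a
    have hN1 : (⇑D)^[N + 1] a = 0 := iterD_stab D (Nat.le_succ N) hN
    rw [hπ a (N + 1) hN1, map_sum]
    set u : ℕ → A := fun j =>
      ((-1 : k) ^ j / (j.factorial : k)) • (x ^ j * (⇑D)^[j + 1] a) with hu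
    have hterm : ∀ i : ℕ,
        D (((-1 : k) ^ (i + 1) / ((i + 1).factorial : k)) • (x ^ (i + 1) * (⇑D)^[i + 1] a))
          = u (i + 1) - u i := by
      intro i
      rw [Derivation.map_smul, Derivation.leibniz, Derivation.leibniz_pow, hx]
      rw [smul_add, hu]
      have hpow : (x ^ (i + 1) : A) • D ((⇑D)^[i + 1] a)
          = x ^ (i + 1) * (⇑D)^[i + 1 + 1] a := by
        rw [smul_eq_mul, ← Function.iterate_succ_apply' (⇑D) (i + 1) a]
      rw [hpow]
      have hxs : ((⇑D)^[i + 1] a) • ((i + 1) • (x ^ (i + 1 - 1) : A) • (1 : A))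
          = (i + 1 : ℕ) • (x ^ i * (⇑D)^[i + 1] a) := by
        simp only [Nat.add_sub_cancel, smul_eq_mul, mul_one, nsmul_eq_mul]
        ring
      rw [hxs]
      have hc : ((-1 : k) ^ (i + 1) / ((i + 1).factorial : k)) •
          ((i + 1 : ℕ) • (x ^ i * (⇑D)^[i + 1] a))
          = -(((-1 : k) ^ i / (i.factorial : k)) • (x ^ i * (⇑D)^[i + 1] a)) := by
        have h1 : ((i : k) + 1) ≠ 0 := Nat.cast_add_one_ne_zero i
        rw [← Nat.cast_smul_eq_nsmul k, smul_smul, ← neg_smul]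
        congr 1
        rw [Nat.factorial_succ, Nat.cast_mul, Nat.cast_add, Nat.cast_one, pow_succ,
          div_mul_eq_mul_div, ← neg_div, div_eq_div_iff (mul_ne_zero h1 (factk i)) (factk i)]
        ring
      rw [hc]
      ring
    have h0 : D (((-1 : k) ^ 0 / ((0 : ℕ).factorial : k)) • (x ^ 0 * (⇑D)^[0] a)) = u 0 := by
      simp [hu]
    rw [Finset.sum_range_succ' (fun i =>
      D (((-1 : k) ^ i / (i.factorial : k)) • (x ^ i * (⇑D)^[i] a))) N]
    rw [h0]
    have : ∑ i ∈ Finset.range N,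
        D (((-1 : k) ^ (i + 1) / ((i + 1).factorial : k)) • (x ^ (i + 1) * (⇑D)^[i + 1] a))
        = ∑ i ∈ Finset.range N, (u (i + 1) - u i) :=
      Finset.sum_congr rfl fun i _ => hterm i
    rw [this, Finset.sum_range_sub u]
    have huN : u N = 0 := by
      rw [hu]
      simp only
      rw [hN1, mul_zero, smul_zero]
    rw [huN]
    ring
  · -- identity on ker D
    intro a hDa
    have h1 : (⇑D)^[1] a = 0 := by simpa using hDa
    rw [hπ a 1 h1]
    simp
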